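/- Let M be the MDP with states S = {s, t₁, t₂} and actions Act = {α, β, γ}, where P(s,α,t₁) = P(s,β,t₂) = P(t₁,γ,s) = P(t₂,γ,t₂) = 1 and all other transition probabilities are 0. Then (i) there exists a scheduler σ for M with Pr^{M,σ}_s(◇{t₁}) = Pr^{M,σ}_s(◇{t₂}); and (ii) for every memoryless (possibly randomized) scheduler σ for M, Pr^{M,σ}_s(◇{t₁}) ≠ Pr^{M,σ}_s(◇{t₂}). In particular, memory is necessary for satisfying relational reachability properties with exact equality. -/

import Mathlib

open scoped Classical
open Filter

noncomputable section

/-- A Markov decision process with state space `S` and action space `A`. -/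
structure MDP (S A : Type) where
  P : S → A → S → ℝ
  nonneg : ∀ s a s', 0 ≤ P s a s'
  le_one : ∀ s a s', P s a s' ≤ 1
  exists_enabled : ∀ s : S, ∃ a : A, (∑' s', P s a s') = 1
  zero_of_not_enabled : ∀ (s : S) (a : A), (∑' s', P s a s') ≠ 1 → (∑' s', P s a s') = 0

namespace MDP

variable {S A : Type}

/-- Action `a` is enabled in state `s`. -/
def Enabled (M : MDP S A) (s : S) (a : A) : Prop := (∑' s', M.P s a s') = 1

/-- `s` is an absorbing state. -/
def AbsorbingState (M : MDP S A) (s : S) : Prop := ∀ a : A, M.Enabled s a → M.P s a s = 1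

/-- An absorbing set of states: all its elements are absorbing. -/
def AbsorbingSet (M : MDP S A) (T : Set S) : Prop := ∀ s ∈ T, M.AbsorbingState s

end MDP

/-- A finite path: an initial state together with a list of (action, next state) steps. -/
abbrev FPath (S A : Type) : Type := S × List (A × S)

/-- The last state of a finite path. -/
def fpLast {S A : Type} (p : FPath S A) : S := ((p.2.map Prod.snd).getLast?).getD p.1

/-- Extending a finite path by one step. -/
def fpExt {S A : Type} (p : FPath S A) (a : A) (s' : S) : FPath S A := (p.1, p.2 ++ [(a, s')])

/-- A (history-dependent, randomized) scheduler for the MDP `M`. -/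
structure Scheduler {S A : Type} (M : MDP S A) where
  act : FPath S A → A → ℝ
  nonneg : ∀ p a, 0 ≤ act p a
  sum_one : ∀ p, (∑' a, act p a) = 1
  not_enabled : ∀ p a, ¬ M.Enabled (fpLast p) a → act p a = 0

namespace Scheduler

variable {S A : Type} {M : MDP S A}

/-- A memoryless scheduler depends only on the last state of the path. -/
def Memoryless (σ : Scheduler M) : Prop :=
  ∀ p : FPath S A, σ.act p = σ.act (fpLast p, ([] : List (A × S)))

/-- A deterministic scheduler chooses a Dirac distribution on every path. -/
def Deterministic (σ : Scheduler M) : Prop := ∀ p : FPath S A, ∃ a : A, σ.act p a = 1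

/-- A memoryless deterministic (MD) scheduler. -/
def MD (σ : Scheduler M) : Prop := σ.Memoryless ∧ σ.Deterministic

end Scheduler

/-- One-step expectation operator: expected value of `g` after one step from `p`. -/
def stepExp {S A : Type} (M : MDP S A) (σ : Scheduler M) (p : FPath S A)
    (g : FPath S A → ℝ) : ℝ :=
  ∑' a : A, ∑' s' : S, σ.act p a * M.P (fpLast p) a s' * g (fpExt p a s')

/-- Probability of visiting `T` within `n` further steps, continuing the finite path `p`. -/
def reachN {S A : Type} (M : MDP S A) (σ : Scheduler M) (T : Set S) :
    ℕ → FPath S A → ℝ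
  | 0, p => if fpLast p ∈ T then 1 else 0
  | n + 1, p => if fpLast p ∈ T then 1 else stepExp M σ p (reachN M σ T n)

/-- Reachability probability `Pr^{M,σ}_s(◇T)`. -/
def reachProb {S A : Type} (M : MDP S A) (σ : Scheduler M) (s : S) (T : Set S) : ℝ :=
  ⨆ n : ℕ, reachN M σ T n (s, [])

/-- Probability of visiting `T` at some time `≥ j` within `j + n` steps, from path `p`. -/
def reachAfterN {S A : Type} (M : MDP S A) (σ : Scheduler M) (T : Set S) :
    ℕ → ℕ → FPath S A → ℝ
  | 0, n, p => reachN M σ T n p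
  | j + 1, n, p => stepExp M σ p (fun p' => reachAfterN M σ T j n p')

/-- Büchi probability `Pr^{M,σ}_s(□◇T)`: the probability of visiting `T` infinitely often. -/
def buchiProb {S A : Type} (M : MDP S A) (σ : Scheduler M) (s : S) (T : Set S) : ℝ :=
  ⨅ j : ℕ, ⨆ n : ℕ, reachAfterN M σ T j n (s, [])

/-- Expected sum of the rewards of the first `n+1` states (counting the current one). -/
def expRewN {S A : Type} (M : MDP S A) (σ : Scheduler M) (R : S → ℝ) :
    ℕ → FPath S A → ℝ
  | 0, p => R (fpLast p)
  | n + 1, p => R (fpLast p) + stepExp M σ p (fun p' => expRewN M σ R n p')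

/-- Expected total reward `E^{M,σ}_s(R)`. -/
def expTotalReward {S A : Type} (M : MDP S A) (σ : Scheduler M) (R : S → ℝ) (s : S) : ℝ :=
  limUnder atTop (fun n => expRewN M σ R n (s, []))

end

/-- States of the example MDP: `s`, `t₁`, `t₂`. -/
inductive St5 : Type where
  | s : St5
  | t1 : St5
  | t2 : St5
deriving DecidableEq

/-- Actions of the example MDP: `α`, `β`, `γ`. -/
inductive Ac5 : Type where
  | α : Ac5
  | β : Ac5
  | γ : Ac5
deriving DecidableEq


instance : Fintype St5 := ⟨{St5.s, St5.t1, St5.t2}, by intro x; cases x <;> decide⟩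
instance : Fintype Ac5 := ⟨{Ac5.α, Ac5.β, Ac5.γ}, by intro x; cases x <;> decide⟩

lemma sumSt (f : St5 → ℝ) : ∑' x, f x = f .s + f .t1 + f .t2 := by
  rw [tsum_fintype]
  show ∑ x ∈ ({St5.s, St5.t1, St5.t2} : Finset St5), f x = _
  rw [Finset.sum_insert (by decide), Finset.sum_insert (by decide), Finset.sum_singleton]; ring

lemma sumAc (f : Ac5 → ℝ) : ∑' a, f a = f .α + f .β + f .γ := by
  rw [tsum_fintype]
  show ∑ a ∈ ({Ac5.α, Ac5.β, Ac5.γ} : Finset Ac5), f a = _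
  rw [Finset.sum_insert (by decide), Finset.sum_insert (by decide), Finset.sum_singleton]; ring

lemma stepExp_expand (M : MDP St5 Ac5) (σ : Scheduler M) (p : FPath St5 Ac5) (g : FPath St5 Ac5 → ℝ) :
    stepExp M σ p g =
      σ.act p .α * M.P (fpLast p) .α .s * g (fpExt p .α .s) +
      σ.act p .α * M.P (fpLast p) .α .t1 * g (fpExt p .α .t1) +
      σ.act p .α * M.P (fpLast p) .α .t2 * g (fpExt p .α .t2) +
      σ.act p .β * M.P (fpLast p) .β .s * g (fpExt p .β .s) +
      σ.act p .β * M.P (fpLast p) .β .t1 * g (fpExt p .β .t1) +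
      σ.act p .β * M.P (fpLast p) .β .t2 * g (fpExt p .β .t2) +
      σ.act p .γ * M.P (fpLast p) .γ .s * g (fpExt p .γ .s) +
      σ.act p .γ * M.P (fpLast p) .γ .t1 * g (fpExt p .γ .t1) +
      σ.act p .γ * M.P (fpLast p) .γ .t2 * g (fpExt p .γ .t2) := by
  rw [stepExp, sumAc]
  rw [sumSt, sumSt, sumSt]
  ring

@[simp] lemma fpLast_ext {p : FPath St5 Ac5} (a : Ac5) (s' : St5) : fpLast (fpExt p a s') = s' := by
  simp [fpLast, fpExt]

@[simp] lemma fpLast_nil (x : St5) : fpLast ((x, []) : FPath St5 Ac5) = x := rfl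

lemma sum_le_one' (M : MDP St5 Ac5) (x : St5) (a : Ac5) : ∑' s', M.P x a s' ≤ 1 := by
  rcases eq_or_ne (∑' s', M.P x a s') 1 with h|h
  · exact h.le
  · rw [M.zero_of_not_enabled _ _ h]; norm_num

lemma reachN_mem (M : MDP St5 Ac5) (σ : Scheduler M) (T : Set St5) (n : ℕ) (p : FPath St5 Ac5)
    (h : fpLast p ∈ T) : reachN M σ T n p = 1 := by
  cases n <;> simp [reachN, h]

lemma reachN_nonneg (M : MDP St5 Ac5) (σ : Scheduler M) (T : Set St5) :
    ∀ n p, 0 ≤ reachN M σ T n p := by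
  intro n
  induction n with
  | zero => intro p; rw [reachN]; split <;> norm_num
  | succ n ih =>
    intro p; rw [reachN]; split
    · norm_num
    · have h9 : ∀ (a : Ac5) (s' : St5),
        0 ≤ σ.act p a * M.P (fpLast p) a s' * reachN M σ T n (fpExt p a s') :=
        fun a s' => mul_nonneg (mul_nonneg (σ.nonneg p a) (M.nonneg _ a s')) (ih _)
      rw [stepExp_expand]
      have := h9 .α .s; have := h9 .α .t1; have := h9 .α .t2
      have := h9 .β .s; have := h9 .β .t1; have := h9 .β .t2
      have := h9 .γ .s; have := h9 .γ .t1; have := h9 .γ .t2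
      linarith

lemma reachN_le_one (M : MDP St5 Ac5) (σ : Scheduler M) (T : Set St5) :
    ∀ n p, reachN M σ T n p ≤ 1 := by
  intro n
  induction n with
  | zero => intro p; rw [reachN]; split <;> norm_num
  | succ n ih =>
    intro p; rw [reachN]; split
    · norm_num
    · have hg0 := reachN_nonneg M σ T n
      have h9 : ∀ (a : Ac5) (s' : St5),
          σ.act p a * M.P (fpLast p) a s' * reachN M σ T n (fpExt p a s')
            ≤ σ.act p a * M.P (fpLast p) a s' :=
        fun a s' => mul_le_of_le_one_right
          (mul_nonneg (σ.nonneg p a) (M.nonneg _ a s')) (ih _)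
      have hs : ∀ a : Ac5, M.P (fpLast p) a .s + M.P (fpLast p) a .t1 + M.P (fpLast p) a .t2 ≤ 1 := by
        intro a; have := sum_le_one' M (fpLast p) a; rwa [sumSt] at this
      have hb : ∀ a : Ac5,
          σ.act p a * M.P (fpLast p) a .s + σ.act p a * M.P (fpLast p) a .t1
            + σ.act p a * M.P (fpLast p) a .t2 ≤ σ.act p a := by
        intro a; nlinarith [hs a, σ.nonneg p a]
      have hact := σ.sum_one p; rw [sumAc] at hact
      rw [stepExp_expand]
      have := h9 .α .s; have := h9 .α .t1; have := h9 .α .t2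
      have := h9 .β .s; have := h9 .β .t1; have := h9 .β .t2
      have := h9 .γ .s; have := h9 .γ .t1; have := h9 .γ .t2
      have := hb .α; have := hb .β; have := hb .γ
      linarith

/-- The pair `(a n, b n)` of reach-probabilities for `{t2}` from `s` and `t1`. -/
def seqA (q r : ℝ) : ℕ → ℝ × ℝ
  | 0 => (0, 0)
  | n + 1 => (q * (seqA q r n).2 + r, (seqA q r n).1)

theorem memory_necessary_for_exact_equality
    (M : MDP St5 Ac5)
    (h1 : M.P St5.s Ac5.α St5.t1 = 1)
    (h2 : M.P St5.s Ac5.β St5.t2 = 1)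
    (h3 : M.P St5.t1 Ac5.γ St5.s = 1)
    (h4 : M.P St5.t2 Ac5.γ St5.t2 = 1)
    (h0 : ∀ (x : St5) (a : Ac5) (y : St5), M.P x a y ≠ 0 →
      (x = St5.s ∧ a = Ac5.α ∧ y = St5.t1) ∨
      (x = St5.s ∧ a = Ac5.β ∧ y = St5.t2) ∨
      (x = St5.t1 ∧ a = Ac5.γ ∧ y = St5.s) ∨
      (x = St5.t2 ∧ a = Ac5.γ ∧ y = St5.t2)) :
    (∃ σ : Scheduler M,
        reachProb M σ St5.s {St5.t1} = reachProb M σ St5.s {St5.t2}) ∧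
    (∀ σ : Scheduler M, σ.Memoryless →
        reachProb M σ St5.s {St5.t1} ≠ reachProb M σ St5.s {St5.t2}) := by
  -- zero transition probabilities
  have z1 : M.P .s .α .s = 0 := by by_contra h; rcases h0 _ _ _ h with ⟨e1,e2,e3⟩|⟨e1,e2,e3⟩|⟨e1,e2,e3⟩|⟨e1,e2,e3⟩ <;> first | exact absurd e1 (by decide) | exact absurd e2 (by decide) | exact absurd e3 (by decide)
  have z2 : M.P .s .α .t2 = 0 := by by_contra h; rcases h0 _ _ _ h with ⟨e1,e2,e3⟩|⟨e1,e2,e3⟩|⟨e1,e2,e3⟩|⟨e1,e2,e3⟩ <;> first | exact absurd e1 (by decide) | exact absurd e2 (by decide) | exact absurd e3 (by decide)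
  have z3 : M.P .s .β .s = 0 := by by_contra h; rcases h0 _ _ _ h with ⟨e1,e2,e3⟩|⟨e1,e2,e3⟩|⟨e1,e2,e3⟩|⟨e1,e2,e3⟩ <;> first | exact absurd e1 (by decide) | exact absurd e2 (by decide) | exact absurd e3 (by decide)
  have z4 : M.P .s .β .t1 = 0 := by by_contra h; rcases h0 _ _ _ h with ⟨e1,e2,e3⟩|⟨e1,e2,e3⟩|⟨e1,e2,e3⟩|⟨e1,e2,e3⟩ <;> first | exact absurd e1 (by decide) | exact absurd e2 (by decide) | exact absurd e3 (by decide)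
  have z5 : M.P .t1 .γ .t1 = 0 := by by_contra h; rcases h0 _ _ _ h with ⟨e1,e2,e3⟩|⟨e1,e2,e3⟩|⟨e1,e2,e3⟩|⟨e1,e2,e3⟩ <;> first | exact absurd e1 (by decide) | exact absurd e2 (by decide) | exact absurd e3 (by decide)
  have z6 : M.P .t1 .γ .t2 = 0 := by by_contra h; rcases h0 _ _ _ h with ⟨e1,e2,e3⟩|⟨e1,e2,e3⟩|⟨e1,e2,e3⟩|⟨e1,e2,e3⟩ <;> first | exact absurd e1 (by decide) | exact absurd e2 (by decide) | exact absurd e3 (by decide)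
  have z7 : M.P .t2 .γ .s = 0 := by by_contra h; rcases h0 _ _ _ h with ⟨e1,e2,e3⟩|⟨e1,e2,e3⟩|⟨e1,e2,e3⟩|⟨e1,e2,e3⟩ <;> first | exact absurd e1 (by decide) | exact absurd e2 (by decide) | exact absurd e3 (by decide)
  have z8 : M.P .t2 .γ .t1 = 0 := by by_contra h; rcases h0 _ _ _ h with ⟨e1,e2,e3⟩|⟨e1,e2,e3⟩|⟨e1,e2,e3⟩|⟨e1,e2,e3⟩ <;> first | exact absurd e1 (by decide) | exact absurd e2 (by decide) | exact absurd e3 (by decide)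
  have zsγ : ∀ y, M.P .s .γ y = 0 := by
    intro y; by_contra h; rcases h0 _ _ _ h with ⟨e1,e2,e3⟩|⟨e1,e2,e3⟩|⟨e1,e2,e3⟩|⟨e1,e2,e3⟩ <;> first | exact absurd e1 (by decide) | exact absurd e2 (by decide) | exact absurd e3 (by decide)
  have zt1α : ∀ y, M.P .t1 .α y = 0 := by
    intro y; by_contra h; rcases h0 _ _ _ h with ⟨e1,e2,e3⟩|⟨e1,e2,e3⟩|⟨e1,e2,e3⟩|⟨e1,e2,e3⟩ <;> first | exact absurd e1 (by decide) | exact absurd e2 (by decide) | exact absurd e3 (by decide)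
  have zt1β : ∀ y, M.P .t1 .β y = 0 := by
    intro y; by_contra h; rcases h0 _ _ _ h with ⟨e1,e2,e3⟩|⟨e1,e2,e3⟩|⟨e1,e2,e3⟩|⟨e1,e2,e3⟩ <;> first | exact absurd e1 (by decide) | exact absurd e2 (by decide) | exact absurd e3 (by decide)
  have zt2α : ∀ y, M.P .t2 .α y = 0 := by
    intro y; by_contra h; rcases h0 _ _ _ h with ⟨e1,e2,e3⟩|⟨e1,e2,e3⟩|⟨e1,e2,e3⟩|⟨e1,e2,e3⟩ <;> first | exact absurd e1 (by decide) | exact absurd e2 (by decide) | exact absurd e3 (by decide)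
  have zt2β : ∀ y, M.P .t2 .β y = 0 := by
    intro y; by_contra h; rcases h0 _ _ _ h with ⟨e1,e2,e3⟩|⟨e1,e2,e3⟩|⟨e1,e2,e3⟩|⟨e1,e2,e3⟩ <;> first | exact absurd e1 (by decide) | exact absurd e2 (by decide) | exact absurd e3 (by decide)
  -- enabledness
  have Eα : M.Enabled .s .α := by rw [MDP.Enabled, sumSt, z1, h1, z2]; ring
  have Eβ : M.Enabled .s .β := by rw [MDP.Enabled, sumSt, z3, z4, h2]; ring
  have E1 : M.Enabled .t1 .γ := by rw [MDP.Enabled, sumSt, h3, z5, z6]; ring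
  have E2 : M.Enabled .t2 .γ := by rw [MDP.Enabled, sumSt, z7, z8, h4]; ring
  have Nγ : ¬ M.Enabled .s .γ := by rw [MDP.Enabled, sumSt, zsγ, zsγ, zsγ]; norm_num
  have N1α : ¬ M.Enabled .t1 .α := by rw [MDP.Enabled, sumSt, zt1α, zt1α, zt1α]; norm_num
  have N1β : ¬ M.Enabled .t1 .β := by rw [MDP.Enabled, sumSt, zt1β, zt1β, zt1β]; norm_num
  have N2α : ¬ M.Enabled .t2 .α := by rw [MDP.Enabled, sumSt, zt2α, zt2α, zt2α]; norm_num
  have N2β : ¬ M.Enabled .t2 .β := by rw [MDP.Enabled, sumSt, zt2β, zt2β, zt2β]; norm_num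
  -- generic scheduler facts
  have actγ1 : ∀ (σ : Scheduler M) (p : FPath St5 Ac5), fpLast p = .t1 → σ.act p .γ = 1 := by
    intro σ p hL
    have hs := σ.sum_one p; rw [sumAc] at hs
    have ha : σ.act p .α = 0 := σ.not_enabled p .α (by rw [hL]; exact N1α)
    have hb : σ.act p .β = 0 := σ.not_enabled p .β (by rw [hL]; exact N1β)
    linarith
  have actγ2 : ∀ (σ : Scheduler M) (p : FPath St5 Ac5), fpLast p = .t2 → σ.act p .γ = 1 := by
    intro σ p hL
    have hs := σ.sum_one p; rw [sumAc] at hs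
    have ha : σ.act p .α = 0 := σ.not_enabled p .α (by rw [hL]; exact N2α)
    have hb : σ.act p .β = 0 := σ.not_enabled p .β (by rw [hL]; exact N2β)
    linarith
  have act1α : ∀ (σ : Scheduler M) (p : FPath St5 Ac5), fpLast p = .t1 → σ.act p .α = 0 :=
    fun σ p hL => σ.not_enabled p .α (by rw [hL]; exact N1α)
  have act1β : ∀ (σ : Scheduler M) (p : FPath St5 Ac5), fpLast p = .t1 → σ.act p .β = 0 :=
    fun σ p hL => σ.not_enabled p .β (by rw [hL]; exact N1β)
  have act2α : ∀ (σ : Scheduler M) (p : FPath St5 Ac5), fpLast p = .t2 → σ.act p .α = 0 :=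
    fun σ p hL => σ.not_enabled p .α (by rw [hL]; exact N2α)
  have act2β : ∀ (σ : Scheduler M) (p : FPath St5 Ac5), fpLast p = .t2 → σ.act p .β = 0 :=
    fun σ p hL => σ.not_enabled p .β (by rw [hL]; exact N2β)
  have actsγ : ∀ (σ : Scheduler M) (p : FPath St5 Ac5), fpLast p = .s → σ.act p .γ = 0 :=
    fun σ p hL => σ.not_enabled p .γ (by rw [hL]; exact Nγ)
  -- generic: from t2, {t1} is never reached
  have reach1_t2 : ∀ (σ : Scheduler M) (n : ℕ) (p : FPath St5 Ac5), fpLast p = .t2 →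
      reachN M σ {St5.t1} n p = 0 := by
    intro σ n
    induction n with
    | zero => intro p hL; rw [reachN, if_neg (by simp [hL])]
    | succ n ih =>
      intro p hL
      rw [reachN, if_neg (by simp [hL]), stepExp_expand, hL,
        act2α σ p hL, act2β σ p hL, z7, z8, ih (fpExt p Ac5.γ St5.t2) (fpLast_ext _ _)]
      ring
  -- generic: the probability to reach {t1} within n+1 steps from s equals act(s,[])(α)
  have reach1_s : ∀ (σ : Scheduler M) (n : ℕ),
      reachN M σ {St5.t1} (n+1) ((St5.s, []) : FPath St5 Ac5) = σ.act (St5.s, []) Ac5.α := by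
    intro σ n
    rw [reachN, if_neg (by simp), stepExp_expand, fpLast_nil,
      z1, z2, z3, z4, actsγ σ ((St5.s, []) : FPath St5 Ac5) rfl, h1, h2,
      reachN_mem M σ _ n (fpExt ((St5.s, []) : FPath St5 Ac5) Ac5.α St5.t1) (by simp),
      reach1_t2 σ n (fpExt ((St5.s, []) : FPath St5 Ac5) Ac5.β St5.t2) (fpLast_ext _ _)]
    ring
  have probT1 : ∀ σ : Scheduler M,
      reachProb M σ St5.s {St5.t1} = σ.act ((St5.s, []) : FPath St5 Ac5) Ac5.α := by
    intro σ
    have hbdd : BddAbove (Set.range fun n => reachN M σ {St5.t1} n ((St5.s, []) : FPath St5 Ac5)) :=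
      ⟨1, by rintro x ⟨n, rfl⟩; exact reachN_le_one M σ _ n _⟩
    apply le_antisymm
    · apply ciSup_le; intro n
      cases n with
      | zero => rw [reachN, if_neg (by simp)]; exact σ.nonneg _ _
      | succ n => exact le_of_eq (reach1_s σ n)
    · calc σ.act ((St5.s, []) : FPath St5 Ac5) Ac5.α
          = reachN M σ {St5.t1} 1 ((St5.s, []) : FPath St5 Ac5) := (reach1_s σ 0).symm
        _ ≤ _ := le_ciSup hbdd 1
  constructor
  · -- Part (i): a scheduler with memory equalizes the two probabilities
    refine ⟨⟨fun p a =>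
        if fpLast p = St5.s then
          (if p.2 = [] then (if a = Ac5.α then (1:ℝ) else 0) else (if a = Ac5.β then 1 else 0))
        else (if a = Ac5.γ then 1 else 0), ?_, ?_, ?_⟩, ?_⟩
    · intro p a; split_ifs <;> norm_num
    · intro p; rw [sumAc]
      by_cases h : fpLast p = St5.s <;> by_cases h2 : p.2 = [] <;> simp [h, h2]
    · intro p a h
      cases hL : fpLast p with
      | s => rw [hL] at h
             cases a with
             | α => exact absurd Eα h
             | β => exact absurd Eβ h
             | γ => simp [hL]
      | t1 => rw [hL] at h
              cases a with
              | α => simp [hL]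
              | β => simp [hL]
              | γ => exact absurd E1 h
      | t2 => rw [hL] at h
              cases a with
              | α => simp [hL]
              | β => simp [hL]
              | γ => exact absurd E2 h
    · set σ : Scheduler M := ⟨_, _, _, _⟩ with hσ
      have a0 : σ.act ((St5.s, []) : FPath St5 Ac5) Ac5.α = 1 := by simp [hσ]
      -- paths
      have L1 : fpLast ((St5.s, [(Ac5.α, St5.t1)]) : FPath St5 Ac5) = St5.t1 := rfl
      have L2 : fpLast ((St5.s, [(Ac5.α, St5.t1), (Ac5.γ, St5.s)]) : FPath St5 Ac5) = St5.s := rfl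
      have c1 : reachN M σ {St5.t2} 1 ((St5.s, [(Ac5.α, St5.t1), (Ac5.γ, St5.s)]) : FPath St5 Ac5) = 1 := by
        rw [reachN, if_neg (by simp [L2]), stepExp_expand, L2,
          z1, z2, z3, z4, actsγ σ _ L2, h1, h2,
          reachN_mem M σ _ 0 (fpExt ((St5.s, [(Ac5.α, St5.t1), (Ac5.γ, St5.s)]) : FPath St5 Ac5) Ac5.β St5.t2) (by simp)]
        have aβ : σ.act ((St5.s, [(Ac5.α, St5.t1), (Ac5.γ, St5.s)]) : FPath St5 Ac5) Ac5.β = 1 := by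
          simp [hσ, L2]
        rw [aβ]
        have h01 : reachN M σ {St5.t2} 0
            (fpExt ((St5.s, [(Ac5.α, St5.t1), (Ac5.γ, St5.s)]) : FPath St5 Ac5) Ac5.α St5.t1) = 0 := by
          rw [reachN, if_neg (by simp)]
        rw [h01]; ring
      have c2 : reachN M σ {St5.t2} 2 ((St5.s, [(Ac5.α, St5.t1)]) : FPath St5 Ac5) = 1 := by
        rw [reachN, if_neg (by simp [L1]), stepExp_expand, L1,
          act1α σ _ L1, act1β σ _ L1, actγ1 σ _ L1, h3, z5, z6]
        have : fpExt ((St5.s, [(Ac5.α, St5.t1)]) : FPath St5 Ac5) Ac5.γ St5.s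
            = ((St5.s, [(Ac5.α, St5.t1), (Ac5.γ, St5.s)]) : FPath St5 Ac5) := rfl
        rw [this, c1]; ring
      have c3 : reachN M σ {St5.t2} 3 ((St5.s, []) : FPath St5 Ac5) = 1 := by
        rw [reachN, if_neg (by simp), stepExp_expand, fpLast_nil,
          z1, z2, z3, z4, actsγ σ ((St5.s, []) : FPath St5 Ac5) rfl, h1, h2, a0]
        have aβ0 : σ.act ((St5.s, []) : FPath St5 Ac5) Ac5.β = 0 := by simp [hσ]
        have : fpExt ((St5.s, []) : FPath St5 Ac5) Ac5.α St5.t1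
            = ((St5.s, [(Ac5.α, St5.t1)]) : FPath St5 Ac5) := rfl
        rw [aβ0, this, c2]; ring
      have hbdd : BddAbove (Set.range fun n => reachN M σ {St5.t2} n ((St5.s, []) : FPath St5 Ac5)) :=
        ⟨1, by rintro x ⟨n, rfl⟩; exact reachN_le_one M σ _ n _⟩
      have p2 : reachProb M σ St5.s {St5.t2} = 1 := by
        apply le_antisymm
        · exact ciSup_le fun n => reachN_le_one M σ _ n _
        · calc (1:ℝ) = reachN M σ {St5.t2} 3 ((St5.s, []) : FPath St5 Ac5) := c3.symm
            _ ≤ _ := le_ciSup hbdd 3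
      rw [probT1 σ, a0, p2]
  · -- Part (ii): no memoryless scheduler equalizes them
    intro σ hm heq
    set q := σ.act ((St5.s, []) : FPath St5 Ac5) Ac5.α with hqdef
    set r := σ.act ((St5.s, []) : FPath St5 Ac5) Ac5.β with hrdef
    have hq0 : 0 ≤ q := σ.nonneg _ _
    have hr0 : 0 ≤ r := σ.nonneg _ _
    have hqr : q + r = 1 := by
      have hs := σ.sum_one ((St5.s, []) : FPath St5 Ac5); rw [sumAc] at hs
      have hγ : σ.act ((St5.s, []) : FPath St5 Ac5) Ac5.γ = 0 := actsγ σ _ rfl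
      rw [← hqdef, ← hrdef, hγ] at hs; linarith
    have hq1 : q ≤ 1 := by linarith
    have key : ∀ n : ℕ,
        (∀ p : FPath St5 Ac5, fpLast p = St5.s → reachN M σ {St5.t2} n p = (seqA q r n).1) ∧
        (∀ p : FPath St5 Ac5, fpLast p = St5.t1 → reachN M σ {St5.t2} n p = (seqA q r n).2) := by
      intro n
      induction n with
      | zero =>
        constructor <;> intro p hL <;> rw [reachN, if_neg (by simp [hL])] <;> simp [seqA]
      | succ n ih =>
        constructor
        · intro p hL
          have hα : σ.act p Ac5.α = q := by
            have := congrFun (hm p) Ac5.α; rw [hL] at this; rw [this, hqdef]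
          have hβ : σ.act p Ac5.β = r := by
            have := congrFun (hm p) Ac5.β; rw [hL] at this; rw [this, hrdef]
          rw [reachN, if_neg (by simp [hL]), stepExp_expand, hL,
            hα, hβ, actsγ σ p hL, z1, z2, z3, z4, h1, h2,
            ih.2 (fpExt p Ac5.α St5.t1) (fpLast_ext _ _),
            reachN_mem M σ _ n (fpExt p Ac5.β St5.t2) (by simp)]
          simp only [seqA]; ring
        · intro p hL
          rw [reachN, if_neg (by simp [hL]), stepExp_expand, hL,
            act1α σ p hL, act1β σ p hL, actγ1 σ p hL, h3, z5, z6,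
            ih.1 (fpExt p Ac5.γ St5.s) (fpLast_ext _ _)]
          simp only [seqA]; ring
    have probT2 : reachProb M σ St5.s {St5.t2} = ⨆ n, (seqA q r n).1 := by
      rw [reachProb]
      congr 1; funext n; exact (key n).1 _ rfl
    have heq' : q = ⨆ n, (seqA q r n).1 := by
      rw [← probT2, ← heq, probT1 σ]
    have hbdd : BddAbove (Set.range fun n => (seqA q r n).1) := by
      refine ⟨1, ?_⟩
      rintro x ⟨n, rfl⟩
      have h := (key n).1 ((St5.s, []) : FPath St5 Ac5) rfl
      show (seqA q r n).1 ≤ 1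
      rw [← h]
      exact reachN_le_one M σ _ n _
    have hub : ∀ n, (seqA q r n).1 ≤ q := by
      intro n
      calc (seqA q r n).1 ≤ ⨆ m, (seqA q r m).1 := le_ciSup hbdd n
        _ = q := heq'.symm
    rcases eq_or_lt_of_le hq1 with hq1' | hq1'
    · -- q = 1, r = 0 : never reach t2
      have hr : r = 0 := by linarith
      have azero : ∀ n, (seqA q r n).1 = 0 ∧ (seqA q r n).2 = 0 := by
        intro n; induction n with
        | zero => simp [seqA]
        | succ n ih =>
          constructor
          · show q * (seqA q r n).2 + r = 0
            rw [ih.2, hr]; ring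
          · show (seqA q r n).1 = 0
            exact ih.1
      have hle : (⨆ n, (seqA q r n).1) ≤ 0 := ciSup_le fun n => (azero n).1.le
      rw [← heq'] at hle
      linarith
    · -- q < 1 : eventually reach t2 with probability > q
      have odd : ∀ k : ℕ, (seqA q r (2*k+1)).1 = 1 - q^(k+1) := by
        intro k
        induction k with
        | zero =>
          simp [seqA]; linarith
        | succ k ih =>
          have h2 : 2*(k+1)+1 = (2*k+1) + 1 + 1 := by ring
          rw [h2]
          show q * (seqA q r (2*k+1)).1 + r = _
          rw [ih]
          have hrq : r = 1 - q := by linarith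
          rw [hrq]; ring
      obtain ⟨k, hk⟩ := exists_pow_lt_of_lt_one (by linarith : (0:ℝ) < 1 - q) hq1'
      have hmono : q^(k+1) ≤ q^k := by
        calc q^(k+1) = q * q^k := by ring
          _ ≤ 1 * q^k := mul_le_mul_of_nonneg_right hq1'.le (pow_nonneg hq0 k)
          _ = q^k := one_mul _
      have := hub (2*k+1)
      rw [odd k] at this
      linarith
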